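/- Let d ≥ 1, let K : ℝ^d → ℝ be a probability density satisfying the moment conditions ∫ t_i K(t) dt = 0 and ∫ t_i t_j K(t) dt = δ_{ij} for all i, j, as well as ∫ ‖t‖³ K(t) dt < ∞. Let ρ ∈ C³(ℝ^d) have bounded derivatives up to order three, let h₀ ∈ GL(d,ℝ), x ∈ ℝ^d, and let H = D²ρ(x) denote the Hessian of ρ at x. Then lim_{ε → 0⁺} ε^{−2} ( ∫_{ℝ^d} K(t) ρ(x − ε h₀ t) dt − ρ(x) ) = (1/2) tr(h₀ᵀ H h₀); i.e. the bias of the kernel density estimate with bandwidth matrix h = ε h₀ at x equals (1/2) tr(hᵀ H h) to leading order. -/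

import Mathlib

open MeasureTheory Matrix Filter Topology

section Taylor
variable {E : Type*} [NormedAddCommGroup E] [NormedSpace ℝ E]

lemma kde_taylor3_bound {f : E → ℝ} (hf : ContDiff ℝ 3 f) {C : ℝ}
    (hC : ∀ z, ‖iteratedFDeriv ℝ 3 f z‖ ≤ C) (x v : E) :
    |f (x + v) - f x - fderiv ℝ f x v
       - (1/2 : ℝ) * fderiv ℝ (fderiv ℝ f) x v v| ≤ C * ‖v‖ ^ 3 := by
  set g := fderiv ℝ f with hgdef
  set A := fderiv ℝ g x with hAdef
  have hg : ContDiff ℝ 2 g := hf.fderiv_right (by norm_num)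
  have hA : ContDiff ℝ 1 (fderiv ℝ g) := hg.fderiv_right (by norm_num)
  have hfd : Differentiable ℝ f := hf.differentiable (by norm_num)
  have hgd : Differentiable ℝ g := hg.differentiable (by norm_num)
  have hAd : Differentiable ℝ (fderiv ℝ g) := hA.differentiable (by norm_num)
  letI : NormedAddCommGroup (E →L[ℝ] E →L[ℝ] ℝ) := ContinuousLinearMap.toNormedAddCommGroup
  letI : NormedSpace ℝ (E →L[ℝ] E →L[ℝ] ℝ) := ContinuousLinearMap.toNormedSpace
  -- Step A: third derivative bound for fderiv (fderiv g)
  have stepA : ∀ z, ‖fderiv ℝ (fderiv ℝ g) z‖ ≤ C := by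
    intro z
    have : ‖fderiv ℝ (fderiv ℝ g) z‖ = ‖iteratedFDeriv ℝ 3 f z‖ := by
      rw [← norm_iteratedFDeriv_zero (𝕜 := ℝ) (f := fderiv ℝ (fderiv ℝ g)) (x := z),
        norm_iteratedFDeriv_fderiv, norm_iteratedFDeriv_fderiv, hgdef,
        norm_iteratedFDeriv_fderiv]
    rw [this]; exact hC z
  have hCnn : 0 ≤ C := le_trans (norm_nonneg _) (hC x)
  -- step A': Lipschitz
  have hLip : ∀ z w, ‖fderiv ℝ g z - fderiv ℝ g w‖ ≤ C * ‖z - w‖ := fun z w =>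
    Convex.norm_image_sub_le_of_norm_fderiv_le (fun u _ => hAd u)
      (fun u _ => stepA u) convex_univ (Set.mem_univ w) (Set.mem_univ z)
  -- Step B
  have stepB : ∀ w : E, ‖g (x + w) - g x - A w‖ ≤ C * ‖w‖ ^ 2 := by
    intro w
    have hbound : ∀ u ∈ Metric.closedBall x ‖w‖, ‖fderiv ℝ g u - A‖ ≤ C * ‖w‖ := by
      intro u hu
      have h1 : ‖u - x‖ ≤ ‖w‖ := by
        have := Metric.mem_closedBall.mp hu
        rwa [dist_eq_norm] at this
      calc ‖fderiv ℝ g u - A‖ ≤ C * ‖u - x‖ := hLip u x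
      _ ≤ C * ‖w‖ := mul_le_mul_of_nonneg_left h1 hCnn
    have hmem : x + w ∈ Metric.closedBall x ‖w‖ := by
      simp [Metric.mem_closedBall, dist_eq_norm]
    have := Convex.norm_image_sub_le_of_norm_fderiv_le' (s := Metric.closedBall x ‖w‖)
      (f := g) (φ := A) (C := C * ‖w‖) (x := x) (y := x + w) (fun u _ => hgd u)
      hbound (convex_closedBall _ _) (Metric.mem_closedBall_self (norm_nonneg _)) hmem
    simpa [add_sub_cancel_left, pow_two, mul_assoc] using this
  -- symmetry of the second derivative
  have hsymm : ∀ u w : E, A u w = A w u :=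
    second_derivative_symmetric (fun y => (hfd y).hasFDerivAt) ((hgd x).hasFDerivAt)
  set φf : E → ℝ := fun w => f (x + w) - f x - g x w - (1/2 : ℝ) * (A w) w with hφdef
  have hφderiv : ∀ w : E, HasFDerivAt φf (g (x + w) - g x - A w) w := by
    intro w
    have h1 : HasFDerivAt (fun w : E => f (x + w)) (g (x + w)) w := by
      have := ((hfd (x + w)).hasFDerivAt).comp w ((hasFDerivAt_id w).const_add x)
      simpa [Function.comp_def] using this
    have h2 : HasFDerivAt (fun w : E => g x w) (g x) w := (g x).hasFDerivAt
    have h3 : HasFDerivAt (fun w : E => (A w) w) (A w + A.flip w) w := by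
      have := (A.hasFDerivAt (x := w)).clm_apply (hasFDerivAt_id w)
      simpa using this
    have h4 : HasFDerivAt (fun w : E => (1/2 : ℝ) * (A w) w)
        ((1/2 : ℝ) • (A w + A.flip w)) w := h3.const_mul _
    have heq : (1/2 : ℝ) • (A w + A.flip w) = A w := by
      ext u
      simp only [ContinuousLinearMap.smul_apply, ContinuousLinearMap.add_apply,
        ContinuousLinearMap.flip_apply, smul_eq_mul, hsymm u w]
      ring
    have hcomb := ((h1.sub_const (f x)).sub h2).sub h4
    rw [heq] at hcomb
    exact hcomb
  have hDbound : ∀ w ∈ Metric.closedBall (0:E) ‖v‖, ‖fderiv ℝ φf w‖ ≤ C * ‖v‖ ^ 2 := by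
    intro w hw
    rw [(hφderiv w).fderiv]
    have h1 : ‖w‖ ≤ ‖v‖ := by simpa [dist_eq_norm] using Metric.mem_closedBall.mp hw
    calc ‖g (x + w) - g x - A w‖ ≤ C * ‖w‖ ^ 2 := stepB w
    _ ≤ C * ‖v‖ ^ 2 := by
        apply mul_le_mul_of_nonneg_left _ hCnn
        exact pow_le_pow_left₀ (norm_nonneg _) h1 2
  have key := Convex.norm_image_sub_le_of_norm_fderiv_le (s := Metric.closedBall (0:E) ‖v‖)
    (x := (0:E)) (y := v)
    (fun u _ => (hφderiv u).differentiableAt) hDbound (convex_closedBall _ _)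
    (Metric.mem_closedBall_self (norm_nonneg _))
    (by simp [Metric.mem_closedBall, dist_eq_norm])
  have hφ0 : φf 0 = 0 := by simp [hφdef]
  rw [hφ0, sub_zero, sub_zero] at key
  calc |f (x + v) - f x - g x v - (1/2 : ℝ) * (A v) v| = ‖φf v‖ := rfl
  _ ≤ C * ‖v‖ ^ 2 * ‖v‖ := key
  _ = C * ‖v‖ ^ 3 := by ring

end Taylor

set_option maxHeartbeats 1000000 in
/-- **Leading term of the bias of the kernel density estimate.**
For a probability density kernel `K` with vanishing first moments, identity
second moments and finite third absolute moment, and `ρ ∈ C³` with bounded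
derivatives up to order three, one has
`ε⁻² (∫ K(t) ρ(x − ε h₀ t) dt − ρ(x)) → (1/2) tr(h₀ᵀ H h₀)` as `ε → 0⁺`,
where `H = D²ρ(x)` is the Hessian of `ρ` at `x`; i.e. the bias of the kernel
density estimate with bandwidth matrix `h = ε h₀` equals `(1/2) tr(hᵀ H h)`
to leading order. -/
theorem kde_bias_leading_term
    (d : ℕ) (hd : 1 ≤ d)
    (K : (Fin d → ℝ) → ℝ) (hK_nonneg : ∀ t, 0 ≤ K t)
    (hK_int : (∫ t : Fin d → ℝ, K t) = 1)
    (hK_mom1 : ∀ i : Fin d, (∫ t : Fin d → ℝ, t i * K t) = 0)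
    (hK_mom2 : ∀ i j : Fin d,
      (∫ t : Fin d → ℝ, t i * t j * K t) = if i = j then 1 else 0)
    (hK_mom3 : Integrable (fun t : Fin d → ℝ => ‖t‖ ^ 3 * K t))
    (ρ : (Fin d → ℝ) → ℝ) (hρ_smooth : ContDiff ℝ 3 ρ)
    (hρ_bdd : ∀ n : ℕ, n ≤ 3 → ∃ C : ℝ, ∀ z, ‖iteratedFDeriv ℝ n ρ z‖ ≤ C)
    (h₀ : Matrix (Fin d) (Fin d) ℝ) (hh₀ : IsUnit h₀.det)
    (x : Fin d → ℝ)
    (H : Matrix (Fin d) (Fin d) ℝ)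
    (hH : ∀ i j : Fin d, H i j
      = fderiv ℝ (fun z => fderiv ℝ ρ z (Pi.single j 1)) x (Pi.single i 1)) :
    Tendsto
      (fun ε : ℝ => (ε ^ 2)⁻¹ *
        ((∫ t : Fin d → ℝ, K t * ρ (x - ε • h₀.mulVec t)) - ρ x))
      (𝓝[>] 0) (𝓝 ((1 / 2) * (h₀ᵀ * H * h₀).trace)) := by
  classical
  -- K is integrable
  have hK_integrable : Integrable K := by
    by_contra h
    rw [integral_undef h] at hK_int
    norm_num at hK_int
  have hKa : AEStronglyMeasurable K (volume : Measure (Fin d → ℝ)) := hK_integrable.1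
  -- the continuous linear map given by h₀
  set L : (Fin d → ℝ) →L[ℝ] (Fin d → ℝ) := LinearMap.toContinuousLinearMap (Matrix.mulVecLin h₀) with hLdef
  have hL : ∀ t : (Fin d → ℝ), L t = h₀.mulVec t := fun t => rfl
  set g := fderiv ℝ ρ with hgdef
  set A := fderiv ℝ g x with hAdef
  have hg : ContDiff ℝ 2 g := hρ_smooth.fderiv_right (by norm_num)
  have hgd : Differentiable ℝ g := hg.differentiable (by norm_num)
  obtain ⟨C3, hC3⟩ := hρ_bdd 3 le_rfl
  obtain ⟨C0, hC0'⟩ := hρ_bdd 0 (by norm_num)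
  have hC0 : ∀ z, |ρ z| ≤ C0 := by
    intro z
    have := hC0' z
    rwa [norm_iteratedFDeriv_zero, Real.norm_eq_abs] at this
  have hC3nn : 0 ≤ C3 := le_trans (norm_nonneg _) (hC3 x)
  have htay : ∀ v : (Fin d → ℝ), |ρ (x + v) - ρ x - g x v - (1/2 : ℝ) * A v v| ≤ C3 * ‖v‖ ^ 3 :=
    fun v => kde_taylor3_bound hρ_smooth hC3 x v
  -- elementary polynomial bounds
  have hcube1 : ∀ s : ℝ, 0 ≤ s → s ≤ 1 + s ^ 3 := by
    intro s hs
    nlinarith [mul_nonneg hs (sq_nonneg (s - 1)), sq_nonneg (2 * s - 1)]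
  have hcube2 : ∀ s : ℝ, 0 ≤ s → s ^ 2 ≤ 1 + s ^ 3 := by
    intro s hs
    nlinarith [mul_nonneg hs (sq_nonneg (s - 1)), sq_nonneg (2 * s - 1)]
  have hdom : Integrable (fun t : (Fin d → ℝ) => K t + ‖t‖ ^ 3 * K t) := hK_integrable.add hK_mom3
  -- integrability of first and second moments
  have hpoly1 : ∀ a : Fin d, Integrable (fun t : (Fin d → ℝ) => t a * K t) := by
    intro a
    refine hdom.mono ((measurable_pi_apply a).aestronglyMeasurable.mul hKa) ?_
    refine Filter.Eventually.of_forall fun t => ?_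
    have h1 : |t a| ≤ ‖t‖ := by
      simpa [Real.norm_eq_abs] using norm_le_pi_norm t a
    have h2 : (0:ℝ) ≤ K t + ‖t‖ ^ 3 * K t := add_nonneg (hK_nonneg t) (mul_nonneg (pow_nonneg (norm_nonneg t) 3) (hK_nonneg t))
    rw [Real.norm_eq_abs, Real.norm_eq_abs, abs_of_nonneg h2, abs_mul, abs_of_nonneg (hK_nonneg t)]
    calc |t a| * K t ≤ (1 + ‖t‖ ^ 3) * K t := by
          apply mul_le_mul_of_nonneg_right _ (hK_nonneg t)
          exact le_trans h1 (hcube1 _ (norm_nonneg t))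
    _ = K t + ‖t‖ ^ 3 * K t := by ring
  have hpoly2 : ∀ a b : Fin d, Integrable (fun t : (Fin d → ℝ) => t a * t b * K t) := by
    intro a b
    refine hdom.mono (((measurable_pi_apply a).mul (measurable_pi_apply b)).aestronglyMeasurable.mul hKa) ?_
    refine Filter.Eventually.of_forall fun t => ?_
    have h1 : |t a| ≤ ‖t‖ := by simpa [Real.norm_eq_abs] using norm_le_pi_norm t a
    have h1b : |t b| ≤ ‖t‖ := by simpa [Real.norm_eq_abs] using norm_le_pi_norm t b
    have h2 : (0:ℝ) ≤ K t + ‖t‖ ^ 3 * K t := add_nonneg (hK_nonneg t) (mul_nonneg (pow_nonneg (norm_nonneg t) 3) (hK_nonneg t))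
    rw [Real.norm_eq_abs, Real.norm_eq_abs, abs_of_nonneg h2, abs_mul,
      abs_mul, abs_of_nonneg (hK_nonneg t)]
    calc |t a| * |t b| * K t ≤ (‖t‖ * ‖t‖) * K t := by
          apply mul_le_mul_of_nonneg_right _ (hK_nonneg t)
          exact mul_le_mul h1 h1b (abs_nonneg _) (norm_nonneg _)
    _ ≤ (1 + ‖t‖ ^ 3) * K t := by
          apply mul_le_mul_of_nonneg_right _ (hK_nonneg t)
          have := hcube2 ‖t‖ (norm_nonneg t)
          nlinarith [this]
    _ = K t + ‖t‖ ^ 3 * K t := by ring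
  -- expansion of a continuous linear functional
  have hlin : ∀ (B : (Fin d → ℝ) →L[ℝ] ℝ) (t : (Fin d → ℝ)), B t = ∑ k, t k * B (Pi.single k 1) := by
    intro B t
    have ht : t = ∑ k, t k • (Pi.single k 1 : Fin d → ℝ) := by
      funext m
      simp [Finset.sum_apply, Pi.single_apply]
    calc B t = B (∑ k, t k • (Pi.single k 1 : Fin d → ℝ)) := by rw [← ht]
    _ = ∑ k, t k * B (Pi.single k 1) := by rw [map_sum]; simp
  -- first moment integral vanishes
  have hI1 : ∀ B : (Fin d → ℝ) →L[ℝ] ℝ, Integrable (fun t : (Fin d → ℝ) => K t * B t)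
      ∧ (∫ t : (Fin d → ℝ), K t * B t) = 0 := by
    intro B
    have hfun : (fun t : (Fin d → ℝ) => K t * B t)
        = fun t => ∑ k, B (Pi.single k 1) * (t k * K t) := by
      funext t
      rw [hlin B t, Finset.mul_sum]
      exact Finset.sum_congr rfl fun k _ => by ring
    constructor
    · rw [hfun]
      exact integrable_finset_sum _ fun k _ => (hpoly1 k).const_mul _
    · rw [hfun, integral_finset_sum _ fun k _ => (hpoly1 k).const_mul _]
      simp [integral_const_mul, hK_mom1]
  -- Hessian identification
  have hHA : ∀ i j : Fin d, H i j = A (Pi.single i 1) (Pi.single j 1) := by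
    intro i j
    have hder : HasFDerivAt (fun z => g z (Pi.single j 1)) (A.flip (Pi.single j 1)) x := by
      have h := ((hgd x).hasFDerivAt).clm_apply (hasFDerivAt_const (Pi.single j (1:ℝ)) x)
      simpa using h
    rw [hH i j, hder.fderiv]
    rfl
  -- bilinearity expansion
  have hbil : ∀ u w : (Fin d → ℝ), A u w = ∑ i, ∑ j, u i * w j * H i j := by
    intro u w
    calc A u w = (A.flip w) u := rfl
    _ = ∑ i, u i * (A.flip w) (Pi.single i 1) := hlin _ u
    _ = ∑ i, ∑ j, u i * w j * H i j := by
        refine Finset.sum_congr rfl fun i _ => ?_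
        rw [ContinuousLinearMap.flip_apply, hlin (A (Pi.single i 1)) w, Finset.mul_sum]
        refine Finset.sum_congr rfl fun j _ => ?_
        rw [hHA i j]; ring
  -- second moment integral
  have hI2 : Integrable (fun t : (Fin d → ℝ) => K t * A (L t) (L t))
      ∧ (∫ t : (Fin d → ℝ), K t * A (L t) (L t)) = (h₀ᵀ * H * h₀).trace := by
    have hpoint : (fun t : (Fin d → ℝ) => K t * A (L t) (L t))
        = fun t => ∑ i, ∑ j, ∑ a, ∑ b, (H i j * h₀ i a * h₀ j b) * (t a * t b * K t) := by
      funext t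
      have hLt : ∀ i, L t i = ∑ a, h₀ i a * t a := fun i => by
        simp [hL t, Matrix.mulVec, dotProduct]
      rw [hbil (L t) (L t), Finset.mul_sum]
      refine Finset.sum_congr rfl fun i _ => ?_
      rw [Finset.mul_sum]
      refine Finset.sum_congr rfl fun j _ => ?_
      rw [hLt i, hLt j, Finset.sum_mul_sum]
      simp only [Finset.sum_mul, Finset.mul_sum]
      refine Finset.sum_congr rfl fun a _ => ?_
      refine Finset.sum_congr rfl fun b _ => ?_
      ring
    constructor
    · rw [hpoint]
      exact integrable_finset_sum _ fun i _ => integrable_finset_sum _ fun j _ =>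
        integrable_finset_sum _ fun a _ => integrable_finset_sum _ fun b _ =>
        (hpoly2 a b).const_mul _
    · rw [hpoint]
      rw [integral_finset_sum _ fun i _ => integrable_finset_sum _ fun j _ =>
        integrable_finset_sum _ fun a _ => integrable_finset_sum _ fun b _ =>
        (hpoly2 a b).const_mul _]
      have hval : ∀ i j : Fin d,
          (∫ t : (Fin d → ℝ), ∑ a, ∑ b, (H i j * h₀ i a * h₀ j b) * (t a * t b * K t))
          = ∑ a, H i j * h₀ i a * h₀ j a := by
        intro i j
        rw [integral_finset_sum _ fun a _ => integrable_finset_sum _ fun b _ =>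
          (hpoly2 a b).const_mul _]
        refine Finset.sum_congr rfl fun a _ => ?_
        rw [integral_finset_sum _ fun b _ => (hpoly2 a b).const_mul _]
        have : ∀ b, (∫ t : (Fin d → ℝ), (H i j * h₀ i a * h₀ j b) * (t a * t b * K t))
            = (H i j * h₀ i a * h₀ j b) * (if a = b then 1 else 0) := by
          intro b
          rw [integral_const_mul, hK_mom2 a b]
        simp only [this, mul_ite, mul_one, mul_zero]
        simp [Finset.sum_ite_eq]
      have hval2 : ∀ i : Fin d,
          (∫ t : (Fin d → ℝ), ∑ j, ∑ a, ∑ b, (H i j * h₀ i a * h₀ j b) * (t a * t b * K t))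
          = ∑ j, ∑ a, H i j * h₀ i a * h₀ j a := by
        intro i
        rw [integral_finset_sum _ fun j _ => integrable_finset_sum _ fun a _ =>
          integrable_finset_sum _ fun b _ => (hpoly2 a b).const_mul _]
        exact Finset.sum_congr rfl fun j _ => hval i j
      simp only [hval2]
      have htr : (h₀ᵀ * H * h₀).trace = ∑ a, ∑ i, ∑ j, H i j * h₀ i a * h₀ j a := by
        rw [Matrix.trace]
        refine Finset.sum_congr rfl fun a _ => ?_
        simp only [Matrix.diag_apply, Matrix.mul_apply, Matrix.transpose_apply, Finset.sum_mul]
        rw [Finset.sum_comm]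
        exact Finset.sum_congr rfl fun i _ => Finset.sum_congr rfl fun j _ => by ring
      calc ∑ i, ∑ j, ∑ a, H i j * h₀ i a * h₀ j a
          = ∑ i, ∑ a, ∑ j, H i j * h₀ i a * h₀ j a :=
            Finset.sum_congr rfl fun i _ => Finset.sum_comm
      _ = ∑ a, ∑ i, ∑ j, H i j * h₀ i a * h₀ j a := Finset.sum_comm
      _ = (h₀ᵀ * H * h₀).trace := htr.symm
  -- the Taylor remainder
  set Rem : ℝ → (Fin d → ℝ) → ℝ := fun ε t =>
    ρ (x + (-ε) • L t) - ρ x - g x ((-ε) • L t)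
      - (1/2 : ℝ) * A ((-ε) • L t) ((-ε) • L t) with hRemdef
  have hRem_bound : ∀ (ε : ℝ) (t : Fin d → ℝ),
      |Rem ε t| ≤ C3 * (|ε| * ‖L‖) ^ 3 * ‖t‖ ^ 3 := by
    intro ε t
    have h := htay ((-ε) • L t)
    have hn : ‖(-ε) • L t‖ = |ε| * ‖L t‖ := by
      rw [norm_smul]; simp [Real.norm_eq_abs]
    have hLt : ‖L t‖ ≤ ‖L‖ * ‖t‖ := L.le_opNorm t
    calc |Rem ε t| ≤ C3 * ‖(-ε) • L t‖ ^ 3 := h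
    _ = C3 * (|ε| * ‖L t‖) ^ 3 := by rw [hn]
    _ ≤ C3 * (|ε| * (‖L‖ * ‖t‖)) ^ 3 := by
        apply mul_le_mul_of_nonneg_left _ hC3nn
        apply pow_le_pow_left₀ (mul_nonneg (abs_nonneg _) (norm_nonneg _))
        exact mul_le_mul_of_nonneg_left hLt (abs_nonneg _)
    _ = C3 * (|ε| * ‖L‖) ^ 3 * ‖t‖ ^ 3 := by ring
  -- integrability of the full integrand
  have hcont : ∀ ε : ℝ, Continuous (fun t : Fin d → ℝ => x - ε • h₀.mulVec t) := by
    intro ε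
    exact continuous_const.sub (L.continuous.const_smul ε)
  have hint_ρ : ∀ ε : ℝ,
      Integrable (fun t : Fin d → ℝ => K t * ρ (x - ε • h₀.mulVec t)) := by
    intro ε
    refine (hK_integrable.const_mul C0).mono
      (hKa.mul ((hρ_smooth.continuous.comp (hcont ε)).aestronglyMeasurable)) ?_
    refine Filter.Eventually.of_forall fun t => ?_
    rw [Real.norm_eq_abs, Real.norm_eq_abs, abs_mul, abs_of_nonneg (hK_nonneg t), abs_mul]
    have hC0nn : 0 ≤ C0 := le_trans (abs_nonneg _) (hC0 x)
    calc K t * |ρ (x - ε • h₀.mulVec t)| ≤ K t * C0 :=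
          mul_le_mul_of_nonneg_left (hC0 _) (hK_nonneg t)
    _ ≤ |C0| * |K t| := by
        rw [abs_of_nonneg hC0nn, abs_of_nonneg (hK_nonneg t), mul_comm]
  -- pointwise decomposition
  have hdecomp : ∀ (ε : ℝ) (t : Fin d → ℝ),
      K t * ρ (x - ε • h₀.mulVec t)
        = K t * ρ x + (-ε) * (K t * g x (L t)) + (ε ^ 2 / 2) * (K t * A (L t) (L t))
          + K t * Rem ε t := by
    intro ε t
    have hxe : x - ε • h₀.mulVec t = x + (-ε) • L t := by
      rw [hL t, neg_smul, ← sub_eq_add_neg]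
    have h1 : g x ((-ε) • L t) = (-ε) * g x (L t) := by
      rw [_root_.map_smul]; simp
    have h2 : A ((-ε) • L t) ((-ε) • L t) = ε ^ 2 * A (L t) (L t) := by
      simp only [_root_.map_smul, ContinuousLinearMap.smul_apply, smul_eq_mul]
      ring
    rw [hxe, hRemdef]
    simp only [h1, h2]
    ring
  -- integrability of linear and remainder parts
  have hB1 : Integrable (fun t : Fin d → ℝ => K t * g x (L t)) := by
    have := (hI1 ((g x).comp L)).1
    simpa using this
  have hB2 : (∫ t : Fin d → ℝ, K t * g x (L t)) = 0 := by
    have := (hI1 ((g x).comp L)).2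
    simpa using this
  -- splitting the integral
  have hsplit : ∀ ε : ℝ, (∫ t : Fin d → ℝ, K t * ρ (x - ε • h₀.mulVec t))
      = ρ x + (ε ^ 2 / 2) * (h₀ᵀ * H * h₀).trace
        + ∫ t : Fin d → ℝ, K t * Rem ε t := by
    intro ε
    have hf1 : Integrable (fun t : Fin d → ℝ => K t * ρ x) := hK_integrable.mul_const _
    have hf2 : Integrable (fun t : Fin d → ℝ => (-ε) * (K t * g x (L t))) := hB1.const_mul _
    have hf3 : Integrable (fun t : Fin d → ℝ => (ε ^ 2 / 2) * (K t * A (L t) (L t))) :=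
      hI2.1.const_mul _
    have hf4 : Integrable (fun t : Fin d → ℝ => K t * Rem ε t) := by
      have heq : (fun t : Fin d → ℝ => K t * Rem ε t) = fun t =>
          K t * ρ (x - ε • h₀.mulVec t) - (K t * ρ x + (-ε) * (K t * g x (L t))
            + (ε ^ 2 / 2) * (K t * A (L t) (L t))) := by
        funext t; rw [hdecomp ε t]; ring
      rw [heq]
      exact (hint_ρ ε).sub ((hf1.add hf2).add hf3)
    calc (∫ t : Fin d → ℝ, K t * ρ (x - ε • h₀.mulVec t))
        = ∫ t : Fin d → ℝ, (K t * ρ x + (-ε) * (K t * g x (L t))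
            + (ε ^ 2 / 2) * (K t * A (L t) (L t)) + K t * Rem ε t) := by
          exact integral_congr_ae (Filter.Eventually.of_forall fun t => hdecomp ε t)
    _ = (∫ t : Fin d → ℝ, K t * ρ x) + (∫ t : Fin d → ℝ, (-ε) * (K t * g x (L t)))
          + (∫ t : Fin d → ℝ, (ε ^ 2 / 2) * (K t * A (L t) (L t)))
          + ∫ t : Fin d → ℝ, K t * Rem ε t := by
        have hf12 : Integrable (fun t : Fin d → ℝ =>
            K t * ρ x + (-ε) * (K t * g x (L t))) := hf1.add hf2
        have hf123 : Integrable (fun t : Fin d → ℝ =>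
            K t * ρ x + (-ε) * (K t * g x (L t))
              + (ε ^ 2 / 2) * (K t * A (L t) (L t))) := hf12.add hf3
        rw [integral_add hf123 hf4, integral_add hf12 hf3, integral_add hf1 hf2]
    _ = ρ x + (ε ^ 2 / 2) * (h₀ᵀ * H * h₀).trace + ∫ t : Fin d → ℝ, K t * Rem ε t := by
        rw [integral_mul_const, hK_int, one_mul, integral_const_mul, hB2, mul_zero,
          integral_const_mul, hI2.2]
        ring
  -- bounding the remainder integral
  have hM3nn : 0 ≤ ∫ t : Fin d → ℝ, ‖t‖ ^ 3 * K t :=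
    integral_nonneg fun t => mul_nonneg (pow_nonneg (norm_nonneg _) 3) (hK_nonneg t)
  set M3 := ∫ t : Fin d → ℝ, ‖t‖ ^ 3 * K t with hM3def
  have hRint : ∀ ε : ℝ, |∫ t : Fin d → ℝ, K t * Rem ε t| ≤ C3 * ‖L‖ ^ 3 * M3 * |ε| ^ 3 := by
    intro ε
    have hb : ∀ t : Fin d → ℝ, ‖K t * Rem ε t‖ ≤ (C3 * (|ε| * ‖L‖) ^ 3) * (‖t‖ ^ 3 * K t) := by
      intro t
      rw [Real.norm_eq_abs, abs_mul, abs_of_nonneg (hK_nonneg t)]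
      calc K t * |Rem ε t| ≤ K t * (C3 * (|ε| * ‖L‖) ^ 3 * ‖t‖ ^ 3) :=
            mul_le_mul_of_nonneg_left (hRem_bound ε t) (hK_nonneg t)
      _ = (C3 * (|ε| * ‖L‖) ^ 3) * (‖t‖ ^ 3 * K t) := by ring
    have hnb := norm_integral_le_of_norm_le (hK_mom3.const_mul (C3 * (|ε| * ‖L‖) ^ 3))
      (Filter.Eventually.of_forall hb)
    rw [Real.norm_eq_abs] at hnb
    calc |∫ t : Fin d → ℝ, K t * Rem ε t|
        ≤ ∫ t : Fin d → ℝ, (C3 * (|ε| * ‖L‖) ^ 3) * (‖t‖ ^ 3 * K t) := hnb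
    _ = C3 * ‖L‖ ^ 3 * M3 * |ε| ^ 3 := by rw [integral_const_mul, ← hM3def]; ring
  -- conclusion
  set c := C3 * ‖L‖ ^ 3 * M3 with hcdef
  have hcnn : 0 ≤ c :=
    mul_nonneg (mul_nonneg hC3nn (pow_nonneg (norm_nonneg _) 3)) hM3nn
  set Tr := (h₀ᵀ * H * h₀).trace with hTrdef
  have hev : ∀ᶠ ε in 𝓝[>] (0:ℝ),
      ‖(ε ^ 2)⁻¹ * ((∫ t : Fin d → ℝ, K t * ρ (x - ε • h₀.mulVec t)) - ρ x)
        - (1 / 2) * Tr‖ ≤ c * ε := by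
    filter_upwards [self_mem_nhdsWithin] with ε hε
    have hε0 : (0:ℝ) < ε := hε
    have h2 : (ε:ℝ) ^ 2 ≠ 0 := pow_ne_zero 2 hε0.ne'
    rw [hsplit ε]
    have heq : (ε ^ 2)⁻¹ * ((ρ x + (ε ^ 2 / 2) * Tr + (∫ t : Fin d → ℝ, K t * Rem ε t)) - ρ x)
        - (1 / 2) * Tr = (ε ^ 2)⁻¹ * (∫ t : Fin d → ℝ, K t * Rem ε t) := by
      field_simp
      ring
    rw [heq, Real.norm_eq_abs, abs_mul, abs_inv, abs_pow, abs_of_pos hε0]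
    calc (ε ^ 2)⁻¹ * |∫ t : Fin d → ℝ, K t * Rem ε t|
        ≤ (ε ^ 2)⁻¹ * (c * |ε| ^ 3) := by
          apply mul_le_mul_of_nonneg_left _ (inv_nonneg.mpr (pow_nonneg hε0.le 2))
          have := hRint ε
          calc |∫ t : Fin d → ℝ, K t * Rem ε t| ≤ C3 * ‖L‖ ^ 3 * M3 * |ε| ^ 3 := this
          _ = c * |ε| ^ 3 := by rw [hcdef]
    _ = c * ε := by
        rw [abs_of_pos hε0]
        field_simp
  have hg0 : Tendsto (fun ε : ℝ => c * ε) (𝓝[>] (0:ℝ)) (𝓝 0) := by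
    have h : Tendsto (fun ε : ℝ => c * ε) (𝓝 (0:ℝ)) (𝓝 (c * 0)) :=
      Filter.Tendsto.const_mul c (tendsto_id (x := 𝓝 (0:ℝ)))
    rw [mul_zero] at h
    exact h.mono_left nhdsWithin_le_nhds
  have hzero := squeeze_zero_norm' hev hg0
  have hfinal : Tendsto (fun ε : ℝ =>
      ((ε ^ 2)⁻¹ * ((∫ t : Fin d → ℝ, K t * ρ (x - ε • h₀.mulVec t)) - ρ x)
        - 1 / 2 * Tr) + 1 / 2 * Tr) (𝓝[>] (0:ℝ)) (𝓝 (0 + 1 / 2 * Tr)) :=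
    hzero.add tendsto_const_nhds
  simpa using hfinal
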